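/- Let F be a field, I and J disjoint index sets, and a : I × J → F row-finite (for each i ∈ I, only finitely many j with a(i,j) ≠ 0). For j ∈ J define f_j : I → F by f_j(i) = a(i,j), and for i ∈ I let f_i : I → F be the indicator function of {i}. Then {f_k : k ∈ I ∪ J} is a thin family, I is a base of the thin-sums matroid M it defines, and if the system ∑_j a(i,j)x(j) = 0 has only the trivial solution then J is independent in M. -/

import Mathlib

/-- `I` is thin-independent for the family `f` of functions `X → F`. -/
def ThinIndep {E X F : Type*} [Field F] (f : E → X → F) (I : Set E) : Prop :=
  ∀ l : E → F, (∀ x : X, ∑ᶠ e ∈ I, l e * f e x = 0) → ∀ e ∈ I, l e = 0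

theorem stmt_8 {F : Type*} [Field F] {I J : Type*} [DecidableEq I] (a : I → J → F)
    (hrow : ∀ i : I, {j : J | a i j ≠ 0}.Finite)
    (f : I ⊕ J → I → F)
    (hf : f = Sum.elim (fun i i' => if i' = i then (1 : F) else 0) (fun j i => a i j))
    (M : Matroid (I ⊕ J)) (hME : M.E = Set.univ)
    (hMI : ∀ S : Set (I ⊕ J), M.Indep S ↔ ThinIndep f S) :
    (∀ i : I, {k : I ⊕ J | f k i ≠ 0}.Finite) ∧
    M.IsBase (Set.range Sum.inl) ∧
    ((∀ x : J → F, (∀ i : I, ∑ᶠ j : J, a i j * x j = 0) → x = 0) →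
      M.Indep (Set.range Sum.inr)) := by
  classical
  subst hf
  -- key computation: sum over range inl
  have hsum_inl : ∀ (l : I ⊕ J → F) (x : I),
      ∑ᶠ e ∈ Set.range (Sum.inl : I → I ⊕ J),
        l e * Sum.elim (fun i i' => if i' = i then (1 : F) else 0) (fun j i => a i j) e x
        = l (Sum.inl x) := by
    intro l x
    rw [finsum_mem_range Sum.inl_injective]
    have : ∀ b : I, b ≠ x →
        l (Sum.inl b) * Sum.elim (fun i i' => if i' = i then (1 : F) else 0)
          (fun j i => a i j) (Sum.inl b) x = 0 := by
      intro b hb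
      simp [Ne.symm hb]
    rw [finsum_eq_single _ x this]
    simp
  have hindep : ThinIndep
      (Sum.elim (fun i i' => if i' = i then (1 : F) else 0) (fun j i => a i j))
      (Set.range Sum.inl) := by
    intro l hl e he
    obtain ⟨i, rfl⟩ := he
    have := hl i
    rwa [hsum_inl] at this
  refine ⟨?_, ?_, ?_⟩
  · -- thinness
    intro i
    apply Set.Finite.subset
      (Set.Finite.union (Set.finite_singleton (Sum.inl i)) ((hrow i).image Sum.inr))
    rintro (i' | j) hk
    · left
      simp only [Set.mem_setOf_eq, Sum.elim_inl, ne_eq, ite_eq_right_iff,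
        Classical.not_imp] at hk
      simp [hk.1]
    · right
      exact ⟨j, hk, rfl⟩
  · -- base
    rw [Matroid.isBase_iff_maximal_indep]
    refine ⟨(hMI _).2 hindep, ?_⟩
    intro S hS hsub
    intro k hk
    rcases k with i | j
    · exact ⟨i, rfl⟩
    · exfalso
      -- build a dependence
      set l : I ⊕ J → F :=
        Sum.elim (fun i => -a i j) (fun j' => if j' = j then 1 else 0) with hl
      have hSind := (hMI S).1 hS
      have hzero : ∀ x : I, ∑ᶠ e ∈ S,
          l e * Sum.elim (fun i i' => if i' = i then (1 : F) else 0)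
            (fun j i => a i j) e x = 0 := by
        intro x
        set g : I ⊕ J → F := fun e =>
          l e * Sum.elim (fun i i' => if i' = i then (1 : F) else 0)
            (fun j i => a i j) e x with hg
        have hSeq : S = Set.range (Sum.inl : I → I ⊕ J) ∪ (S ∩ Set.range Sum.inr) := by
          ext e
          rcases e with i | j'
          · simp only [Set.mem_union, Set.mem_inter_iff, Set.mem_range]
            constructor
            · intro _; exact Or.inl ⟨i, rfl⟩
            · intro _; exact hsub ⟨i, rfl⟩
          · constructor
            · intro h
              exact Or.inr ⟨h, ⟨j', rfl⟩⟩
            · rintro (⟨i, h⟩ | ⟨h, _⟩)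
              · exact absurd h (by simp)
              · exact h
        rw [hSeq]
        have hdisj : Disjoint (Set.range (Sum.inl : I → I ⊕ J)) (S ∩ Set.range Sum.inr) := by
          rw [Set.disjoint_iff]
          rintro e ⟨⟨i, rfl⟩, -, ⟨j', h⟩⟩
          exact absurd h (by simp)
        have hfin1 : (Set.range (Sum.inl : I → I ⊕ J) ∩ Function.support g).Finite := by
          apply Set.Finite.subset (Set.finite_singleton (Sum.inl x))
          rintro e ⟨⟨i, rfl⟩, he⟩
          simp only [Function.mem_support, hg] at he
          by_contra hne
          apply he
          have : x ≠ i := fun h => hne (by simp [h])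
          simp [this]
        have hfin2 : ((S ∩ Set.range Sum.inr) ∩ Function.support g).Finite := by
          apply Set.Finite.subset (Set.finite_singleton (Sum.inr j))
          rintro e ⟨⟨-, ⟨j', rfl⟩⟩, he⟩
          simp only [Function.mem_support, hg, hl] at he
          by_contra hne
          apply he
          have : j' ≠ j := fun h => hne (by simp [h])
          simp [this]
        rw [finsum_mem_union' hdisj hfin1 hfin2]
        have h1 : ∑ᶠ e ∈ Set.range (Sum.inl : I → I ⊕ J), g e = -a x j := by
          rw [hsum_inl l x]; simp [hl]
        have h2 : ∑ᶠ e ∈ S ∩ Set.range Sum.inr, g e = a x j := by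
          rw [finsum_mem_def]
          rw [finsum_eq_single _ (Sum.inr j)]
          · rw [Set.indicator_of_mem (Set.mem_inter hk (Set.mem_range_self j)) g]
            simp [hg, hl]
          · rintro (i | j') hb
            · rw [Set.indicator_of_notMem]
              rintro ⟨-, ⟨j', h⟩⟩
              exact absurd h (by simp)
            · have : j' ≠ j := fun h => hb (by simp [h])
              simp [Set.indicator_apply, hg, hl, this]
        rw [h1, h2]; ring
      have := hSind l hzero (Sum.inr j) hk
      simp [hl] at this
  · -- injectivity implies J independent
    intro hx
    rw [hMI]
    intro l hl e he
    obtain ⟨j, rfl⟩ := he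
    have key : ∀ i : I, ∑ᶠ j : J, a i j * l (Sum.inr j) = 0 := by
      intro i
      have := hl i
      rw [finsum_mem_range Sum.inr_injective] at this
      simpa [mul_comm] using this
    have := hx (fun j => l (Sum.inr j)) key
    exact congrFun this j
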